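/- Let n > 0 and r, t, t′, r₁, σ be real numbers satisfying r/2 < t ≤ t′, r₁ > n/2 + max{0, r}, and σ > max{ 3n/2 − t + r/2, n(t′ + max{t′, r₁} − r)/(min{t′, r₁} + t − r) }. Then 2 > [ ( n + n²/(σ − n/2 + t − r/2) ) / ( min{t′, r₁} + t − r ) ] · [ ( t′ + max{t′, r₁} − r ) / ( σ − n/2 + max{t′, r₁} − r/2 ) ]. (In particular, all denominators appearing above are strictly positive under these hypotheses.) -/
import Mathlib


/-- The algebraic sample-size inequality appearing in the proof of the main
convergence-rate theorem: under the stated hypotheses on the dimension `n`, the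
operator order `r`, the Sobolev indices `t ≤ t'`, the input regularity `r₁` and
the off-diagonal decay exponent `σ`, all the relevant denominators are strictly
positive and the product is strictly smaller than `2`. -/
theorem sample_size_condition (n r t t' r₁ σ : ℝ)
    (hn : 0 < n) (h1 : r / 2 < t) (h2 : t ≤ t')
    (h3 : n / 2 + max 0 r < r₁)
    (h4 : max (3 * n / 2 - t + r / 2)
          (n * (t' + max t' r₁ - r) / (min t' r₁ + t - r)) < σ) :
    0 < σ - n / 2 + t - r / 2 ∧ 0 < min t' r₁ + t - r ∧
      0 < σ - n / 2 + max t' r₁ - r / 2 ∧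
      ((n + n ^ 2 / (σ - n / 2 + t - r / 2)) / (min t' r₁ + t - r)) *
          ((t' + max t' r₁ - r) / (σ - n / 2 + max t' r₁ - r / 2)) < 2 := by
  have hmax : r / 2 ≤ max 0 r := by
    rcases le_total 0 r with h | h
    · linarith [le_max_right 0 r]
    · linarith [le_max_left 0 r]
  have hσ1 : 3 * n / 2 - t + r / 2 < σ := lt_of_le_of_lt (le_max_left _ _) h4
  have hA : n < σ - n / 2 + t - r / 2 := by linarith
  have hApos : (0:ℝ) < σ - n / 2 + t - r / 2 := by linarith
  have hmx : t' ≤ max t' r₁ := le_max_left _ _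
  have hmx2 : r₁ ≤ max t' r₁ := le_max_right _ _
  have hM : 0 < min t' r₁ + t - r := by
    rcases min_cases t' r₁ with ⟨h, _⟩ | ⟨h, _⟩ <;> rw [h] <;> linarith
  have hC : 0 < σ - n / 2 + max t' r₁ - r / 2 := by linarith
  refine ⟨hApos, hM, hC, ?_⟩
  have hB : 0 < t' + max t' r₁ - r := by linarith
  have hs2 : n * (t' + max t' r₁ - r) / (min t' r₁ + t - r) < σ :=
    lt_of_le_of_lt (le_max_right _ _) h4
  have hnB : n * (t' + max t' r₁ - r) < σ * (min t' r₁ + t - r) :=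
    (div_lt_iff₀ hM).mp hs2
  have hCσ : σ < σ - n / 2 + max t' r₁ - r / 2 := by linarith
  have hnBCM : n * (t' + max t' r₁ - r) <
      (σ - n / 2 + max t' r₁ - r / 2) * (min t' r₁ + t - r) := by
    nlinarith [mul_lt_mul_of_pos_right hCσ hM]
  have nsq : n ^ 2 / (σ - n / 2 + t - r / 2) < n := by
    rw [div_lt_iff₀ hApos]; nlinarith
  rw [div_mul_div_comm, div_lt_iff₀ (mul_pos hM hC)]
  nlinarith [mul_lt_mul_of_pos_right nsq hB]
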